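/- arXiv:1901.09413 — 2 statements merged into one kernel-verified Lean document; each statement's English description precedes it below -/
import Mathlib

section
/- Let P be the orthogonal projection onto a uniformly random M-dimensional subspace of ℝ^N, and let v ∈ ℝ^N be a fixed nonzero vector. Then for any 0 < ε < 1, the probability that ‖Pv‖₂ ≥ √(1+ε)·√(M/N)·‖v‖₂ is at most exp(−Mε²/12). -/
open MeasureTheory

/-- `P` is an orthogonal projection: idempotent and self-adjoint. -/
def IsOrthogonalProjection {N : ℕ}
    (P : EuclideanSpace ℝ (Fin N) →ₗ[ℝ] EuclideanSpace ℝ (Fin N)) : Prop :=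
  (∀ v, P (P v) = P v) ∧
  (∀ u v : EuclideanSpace ℝ (Fin N), inner ℝ (P u) v = (inner ℝ u (P v) : ℝ))

/-- `ν` is the uniform (rotation-invariant) probability distribution on the unit sphere
of `ℝ^N`. -/
def IsUniformOnUnitSphere {N : ℕ} (ν : Measure (EuclideanSpace ℝ (Fin N))) : Prop :=
  IsProbabilityMeasure ν ∧
  ν {o : EuclideanSpace ℝ (Fin N) | ‖o‖ ≠ 1} = 0 ∧
  ∀ g : EuclideanSpace ℝ (Fin N) ≃ₗᵢ[ℝ] EuclideanSpace ℝ (Fin N), Measure.map g ν = ν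

/-- Norm of the first `M` coordinates of a vector in `ℝ^N` (`M ≤ N`). -/
noncomputable def normFirstCoords {N : ℕ} (M : ℕ) (hMN : M ≤ N)
    (o : EuclideanSpace ℝ (Fin N)) : ℝ :=
  Real.sqrt (∑ i : Fin M, (o (Fin.castLE hMN i)) ^ 2)

set_option maxHeartbeats 1000000

open Real

noncomputable def planeRotL {N : ℕ} (i j : Fin N) (θ : ℝ) :
    EuclideanSpace ℝ (Fin N) →ₗ[ℝ] EuclideanSpace ℝ (Fin N) where
  toFun o := WithLp.toLp 2 fun l => if l = i then Real.cos θ * o i - Real.sin θ * o j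
    else if l = j then Real.sin θ * o i + Real.cos θ * o j else o l
  map_add' o o' := by
    ext l
    simp only [PiLp.add_apply, PiLp.toLp_apply]
    split_ifs <;> ring
  map_smul' c o := by
    ext l
    simp only [PiLp.smul_apply, PiLp.toLp_apply, RingHom.id_apply, smul_eq_mul]
    split_ifs <;> ring

theorem planeRotL_norm {N : ℕ} (i j : Fin N) (hij : i ≠ j) (θ : ℝ)
    (o : EuclideanSpace ℝ (Fin N)) : ‖planeRotL i j θ o‖ = ‖o‖ := by
  rw [EuclideanSpace.norm_eq, EuclideanSpace.norm_eq]
  congr 1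
  have hi : i ∈ Finset.univ := Finset.mem_univ i
  have hj : j ∈ Finset.univ.erase i := Finset.mem_erase.2 ⟨(Ne.symm hij), Finset.mem_univ j⟩
  have key : ∀ f : Fin N → ℝ, ∑ l, f l = f i + f j + ∑ l ∈ (Finset.univ.erase i).erase j, f l := by
    intro f
    rw [← Finset.sum_erase_add _ _ hi, ← Finset.sum_erase_add _ _ hj]
    ring
  rw [key, key fun l => ‖o l‖ ^ 2]
  have ho : ∀ l, l ∈ (Finset.univ.erase i).erase j →
      ‖planeRotL i j θ o l‖ ^ 2 = ‖o l‖ ^ 2 := by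
    intro l hl
    rcases Finset.mem_erase.1 hl with ⟨hlj, hl2⟩
    rcases Finset.mem_erase.1 hl2 with ⟨hli, _⟩
    simp [planeRotL, hli, hlj]
  rw [Finset.sum_congr rfl ho]
  have hs := Real.sin_sq_add_cos_sq θ
  simp only [planeRotL, LinearMap.coe_mk, AddHom.coe_mk, if_pos rfl, if_neg (Ne.symm hij),
    if_neg hij, Real.norm_eq_abs, sq_abs, eq_self_iff_true, if_true]
  nlinarith [hs]

noncomputable def planeRot {N : ℕ} (i j : Fin N) (hij : i ≠ j) (θ : ℝ) :
    EuclideanSpace ℝ (Fin N) ≃ₗᵢ[ℝ] EuclideanSpace ℝ (Fin N) :=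
  LinearIsometry.toLinearIsometryEquiv ⟨planeRotL i j θ, planeRotL_norm i j hij θ⟩ rfl

theorem planeRot_apply {N : ℕ} (i j : Fin N) (hij : i ≠ j) (θ : ℝ)
    (o : EuclideanSpace ℝ (Fin N)) (l : Fin N) :
    planeRot i j hij θ o l = if l = i then Real.cos θ * o i - Real.sin θ * o j
      else if l = j then Real.sin θ * o i + Real.cos θ * o j else o l := rfl

open MeasureTheory Real

noncomputable def Afun {M N : ℕ} (hMN : M ≤ N) (o : EuclideanSpace ℝ (Fin N)) : ℝ :=
  ∑ l : Fin M, o (Fin.castLE hMN l) ^ 2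

theorem Afun_nonneg {M N : ℕ} (hMN : M ≤ N) (o : EuclideanSpace ℝ (Fin N)) :
    0 ≤ Afun hMN o :=
  Finset.sum_nonneg fun _ _ => sq_nonneg _

theorem Afun_continuous {M N : ℕ} (hMN : M ≤ N) :
    Continuous (Afun (N := N) (M := M) hMN) :=
  continuous_finset_sum _ fun l _ => ((EuclideanSpace.proj (Fin.castLE hMN l)).continuous.pow 2)

theorem sum_sq_eq_norm_sq {N : ℕ} (o : EuclideanSpace ℝ (Fin N)) :
    ∑ l, (o l) ^ 2 = ‖o‖ ^ 2 := by
  rw [EuclideanSpace.norm_eq, Real.sq_sqrt (by positivity)]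
  simp [sq_abs]

theorem Afun_le_one {M N : ℕ} (hMN : M ≤ N) (o : EuclideanSpace ℝ (Fin N))
    (ho : ‖o‖ = 1) : Afun hMN o ≤ 1 := by
  have h1 : Afun hMN o = ∑ l ∈ Finset.univ.image (Fin.castLE hMN), (o l) ^ 2 := by
    rw [Finset.sum_image (by intro x _ y _ h; exact Fin.castLE_injective hMN h)]
    rfl
  have h2 : ∑ l ∈ Finset.univ.image (Fin.castLE hMN), (o l) ^ 2 ≤ ∑ l, (o l) ^ 2 :=
    Finset.sum_le_sum_of_subset_of_nonneg (Finset.subset_univ _)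
      (fun _ _ _ => sq_nonneg _)
  rw [h1]
  calc _ ≤ ∑ l, (o l) ^ 2 := h2
    _ = 1 := by rw [sum_sq_eq_norm_sq, ho]; norm_num

theorem sq_le_Afun {M N : ℕ} (hMN : M ≤ N) (o : EuclideanSpace ℝ (Fin N))
    (i : Fin N) (hi : (i : ℕ) < M) : o i ^ 2 ≤ Afun hMN o := by
  have : o (Fin.castLE hMN ⟨i, hi⟩) ^ 2 ≤ Afun hMN o :=
    Finset.single_le_sum (f := fun l => o (Fin.castLE hMN l) ^ 2)
      (fun _ _ => sq_nonneg _) (Finset.mem_univ _)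
  have he : Fin.castLE hMN ⟨i, hi⟩ = i := Fin.ext rfl
  rwa [he] at this

theorem abs_coord_le_one {N : ℕ} (o : EuclideanSpace ℝ (Fin N)) (ho : ‖o‖ = 1)
    (i : Fin N) : |o i| ≤ 1 := by
  have h : o i ^ 2 ≤ 1 := by
    have := Finset.single_le_sum (f := fun l => o l ^ 2) (fun _ _ => sq_nonneg _)
      (Finset.mem_univ i)
    rw [sum_sq_eq_norm_sq, ho] at this
    simpa using this
  nlinarith [abs_nonneg (o i), sq_abs (o i)]

theorem Afun_rot {M N : ℕ} (hMN : M ≤ N) (i j : Fin N) (hij : i ≠ j)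
    (hi : (i : ℕ) < M) (hj : M ≤ (j : ℕ)) (θ : ℝ) (o : EuclideanSpace ℝ (Fin N)) :
    Afun hMN (planeRot i j hij θ o) =
      Afun hMN o - o i ^ 2 + (Real.cos θ * o i - Real.sin θ * o j) ^ 2 := by
  set i' : Fin M := ⟨i, hi⟩ with hi'
  have hci : Fin.castLE hMN i' = i := Fin.ext rfl
  have hterm : ∀ l : Fin M, l ≠ i' →
      (planeRot i j hij θ o) (Fin.castLE hMN l) = o (Fin.castLE hMN l) := by
    intro l hl
    rw [planeRot_apply]
    have h1 : Fin.castLE hMN l ≠ i := by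
      intro h
      apply hl
      apply Fin.ext
      have := congrArg Fin.val h
      simpa using this
    have h2 : Fin.castLE hMN l ≠ j := by
      intro h
      have := congrArg Fin.val h
      simp at this
      omega
    rw [if_neg h1, if_neg h2]
  have hmem : i' ∈ Finset.univ := Finset.mem_univ i'
  have key : ∀ g : Fin M → ℝ, ∑ l, g l = ∑ l ∈ Finset.univ.erase i', g l + g i' :=
    fun g => (Finset.sum_erase_add _ _ hmem).symm
  unfold Afun
  rw [key, key (fun l => o (Fin.castLE hMN l) ^ 2)]
  rw [Finset.sum_congr rfl (fun l hl => by
    rw [hterm l (Finset.ne_of_mem_erase hl)])]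
  rw [hci, planeRot_apply]
  rw [if_pos rfl]
  ring

theorem abs_mul_le' {x y cx cy : ℝ} (hx : |x| ≤ cx) (hy : |y| ≤ cy) : |x * y| ≤ cx * cy := by
  rw [abs_mul]
  exact mul_le_mul hx hy (abs_nonneg _) ((abs_nonneg x).trans hx)

theorem key_integral {M N : ℕ} (hMN : M ≤ N) (ν : Measure (EuclideanSpace ℝ (Fin N)))
    (hP : IsProbabilityMeasure ν)
    (hsph : ν {o : EuclideanSpace ℝ (Fin N) | ‖o‖ ≠ 1} = 0)
    (hrot : ∀ g : EuclideanSpace ℝ (Fin N) ≃ₗᵢ[ℝ] EuclideanSpace ℝ (Fin N),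
      Measure.map g ν = ν)
    (i j : Fin N) (hi : (i : ℕ) < M) (hj : M ≤ (j : ℕ)) (m : ℕ) :
    Integrable (fun o : EuclideanSpace ℝ (Fin N) =>
      (o i ^ 2 - o j ^ 2) * Afun hMN o ^ m
        - 2 * (m : ℝ) * (o i ^ 2 * o j ^ 2) * Afun hMN o ^ (m - 1)) ν ∧
    ∫ o, ((o i ^ 2 - o j ^ 2) * Afun hMN o ^ m
        - 2 * (m : ℝ) * (o i ^ 2 * o j ^ 2) * Afun hMN o ^ (m - 1)) ∂ν = 0 := by
  have hij : i ≠ j := by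
    intro h
    rw [h] at hi
    omega
  set E := EuclideanSpace ℝ (Fin N)
  set u : ℝ → E → ℝ := fun θ o => Real.cos θ * o i - Real.sin θ * o j with hu_def
  set u' : ℝ → E → ℝ := fun θ o => -Real.sin θ * o i - Real.cos θ * o j with hu'_def
  set vv : ℝ → E → ℝ := fun θ o => Real.sin θ * o i + Real.cos θ * o j with hvv_def
  set vv' : ℝ → E → ℝ := fun θ o => Real.cos θ * o i + -Real.sin θ * o j with hvv'_def
  set w : ℝ → E → ℝ := fun θ o => Afun hMN o - o i ^ 2 + (u θ o) ^ 2 with hw_def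
  set F : ℝ → E → ℝ := fun θ o => u θ o * vv θ o * (w θ o) ^ m with hF_def
  set F' : ℝ → E → ℝ := fun θ o =>
    (u' θ o * vv θ o + u θ o * vv' θ o) * w θ o ^ m
      + u θ o * vv θ o * ((m : ℝ) * w θ o ^ (m - 1) * ((2 : ℕ) * u θ o ^ 1 * u' θ o))
    with hF'_def
  -- continuity facts
  have hpi : Continuous fun o : E => o i := (EuclideanSpace.proj i).continuous
  have hpj : Continuous fun o : E => o j := (EuclideanSpace.proj j).continuous
  have hAc : Continuous (Afun (M := M) hMN) := Afun_continuous hMN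
  have hu_c : ∀ θ, Continuous (u θ) := fun θ =>
    (continuous_const.mul hpi).sub (continuous_const.mul hpj)
  have hu'_c : ∀ θ, Continuous (u' θ) := fun θ =>
    (continuous_const.mul hpi).sub (continuous_const.mul hpj)
  have hvv_c : ∀ θ, Continuous (vv θ) := fun θ =>
    (continuous_const.mul hpi).add (continuous_const.mul hpj)
  have hvv'_c : ∀ θ, Continuous (vv' θ) := fun θ =>
    (continuous_const.mul hpi).add (continuous_const.mul hpj)
  have hw_c : ∀ θ, Continuous (w θ) := fun θ =>
    (hAc.sub (hpi.pow 2)).add ((hu_c θ).pow 2)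
  have hF_c : ∀ θ, Continuous (F θ) := fun θ =>
    ((hu_c θ).mul (hvv_c θ)).mul ((hw_c θ).pow m)
  have hF'_c : ∀ θ, Continuous (F' θ) := fun θ => by
    apply Continuous.add
    · exact (((hu'_c θ).mul (hvv_c θ)).add ((hu_c θ).mul (hvv'_c θ))).mul ((hw_c θ).pow m)
    · exact ((hu_c θ).mul (hvv_c θ)).mul
        ((continuous_const.mul ((hw_c θ).pow (m-1))).mul
          ((continuous_const.mul ((hu_c θ).pow 1)).mul (hu'_c θ)))
  -- a.e. facts
  have hae : ∀ᵐ o ∂ν, ‖o‖ = 1 := by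
    rw [ae_iff]
    exact hsph
  have hfacts : ∀ᵐ o ∂ν, |o i| ≤ 1 ∧ |o j| ≤ 1 ∧ 0 ≤ Afun hMN o - o i ^ 2 ∧
      Afun hMN o ≤ 1 := by
    filter_upwards [hae] with o ho
    exact ⟨abs_coord_le_one o ho i, abs_coord_le_one o ho j,
      by linarith [sq_le_Afun hMN o i hi], Afun_le_one hMN o ho⟩
  -- bounds
  have hbnd : ∀ o : E, |o i| ≤ 1 → |o j| ≤ 1 → 0 ≤ Afun hMN o - o i ^ 2 →
      Afun hMN o ≤ 1 → ∀ θ : ℝ,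
      |u θ o| ≤ 2 ∧ |u' θ o| ≤ 2 ∧ |vv θ o| ≤ 2 ∧ |vv' θ o| ≤ 2 ∧
      |w θ o ^ m| ≤ 5 ^ m ∧ |w θ o ^ (m-1)| ≤ 5 ^ m := by
    intro o ha hb ht hA θ
    have hc := Real.abs_cos_le_one θ
    have hs := Real.abs_sin_le_one θ
    have h1 : |Real.cos θ * o i| ≤ 1 := by
      rw [abs_mul]; exact mul_le_one₀ hc (abs_nonneg _) ha
    have h2 : |Real.sin θ * o j| ≤ 1 := by
      rw [abs_mul]; exact mul_le_one₀ hs (abs_nonneg _) hb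
    have h3 : |Real.sin θ * o i| ≤ 1 := by
      rw [abs_mul]; exact mul_le_one₀ hs (abs_nonneg _) ha
    have h4 : |Real.cos θ * o j| ≤ 1 := by
      rw [abs_mul]; exact mul_le_one₀ hc (abs_nonneg _) hb
    have hu2 : |u θ o| ≤ 2 := by
      simp only [hu_def]
      calc |Real.cos θ * o i - Real.sin θ * o j|
          ≤ |Real.cos θ * o i| + |Real.sin θ * o j| := abs_sub _ _
        _ ≤ 2 := by linarith
    have hu'2 : |u' θ o| ≤ 2 := by
      simp only [hu'_def]
      calc |(-Real.sin θ) * o i - Real.cos θ * o j|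
          ≤ |(-Real.sin θ) * o i| + |Real.cos θ * o j| := abs_sub _ _
        _ ≤ 2 := by rw [neg_mul, abs_neg]; linarith
    have hv2 : |vv θ o| ≤ 2 := by
      simp only [hvv_def]
      calc |Real.sin θ * o i + Real.cos θ * o j|
          ≤ |Real.sin θ * o i| + |Real.cos θ * o j| := abs_add_le _ _
        _ ≤ 2 := by linarith
    have hv'2 : |vv' θ o| ≤ 2 := by
      simp only [hvv'_def]
      calc |Real.cos θ * o i + (-Real.sin θ) * o j|
          ≤ |Real.cos θ * o i| + |(-Real.sin θ) * o j| := abs_add_le _ _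
        _ ≤ 2 := by rw [neg_mul, abs_neg]; linarith
    have hw0 : 0 ≤ w θ o := by
      have := sq_nonneg (u θ o)
      simp only [hw_def]
      linarith
    have hw5 : w θ o ≤ 5 := by
      have hu4 : u θ o ^ 2 ≤ 4 := by
        nlinarith [sq_abs (u θ o), abs_nonneg (u θ o)]
      have hAi : 0 ≤ o i ^ 2 := sq_nonneg _
      simp only [hw_def]
      linarith
    have habs5 : |w θ o| ≤ 5 := by rw [abs_of_nonneg hw0]; exact hw5
    have hwm : |w θ o ^ m| ≤ 5 ^ m := by
      rw [abs_pow]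
      exact pow_le_pow_left₀ (abs_nonneg _) habs5 m
    have hwm' : |w θ o ^ (m-1)| ≤ 5 ^ m := by
      rw [abs_pow]
      refine (pow_le_pow_left₀ (abs_nonneg _) habs5 _).trans ?_
      exact pow_le_pow_right₀ (by norm_num) (Nat.sub_le m 1)
    exact ⟨hu2, hu'2, hv2, hv'2, hwm, hwm'⟩
  set C : ℝ := 8 * 5 ^ m + 32 * (m : ℝ) * 5 ^ m with hC_def
  have hbound : ∀ᵐ o ∂ν, ∀ θ ∈ Metric.ball (0:ℝ) 1, ‖F' θ o‖ ≤ C := by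
    filter_upwards [hfacts] with o ho θ _
    obtain ⟨ha, hb, ht, hA⟩ := ho
    obtain ⟨hu2, hu'2, hv2, hv'2, hwm, hwm'⟩ := hbnd o ha hb ht hA θ
    rw [Real.norm_eq_abs]
    simp only [hF'_def]
    have t1 : |(u' θ o * vv θ o + u θ o * vv' θ o) * w θ o ^ m| ≤ 8 * 5 ^ m := by
      have h8 : |u' θ o * vv θ o + u θ o * vv' θ o| ≤ 8 := by
        refine (abs_add_le _ _).trans ?_
        have := add_le_add (abs_mul_le' hu'2 hv2) (abs_mul_le' hu2 hv'2)
        refine this.trans (by norm_num)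
      exact abs_mul_le' h8 hwm
    have t2 : |u θ o * vv θ o * ((m : ℝ) * w θ o ^ (m - 1)
        * ((2:ℕ) * u θ o ^ 1 * u' θ o))| ≤ 2 * 2 * ((m : ℝ) * 5 ^ m * (2 * 2 * 2)) := by
      have hm : |(m : ℝ)| ≤ (m : ℝ) := by rw [abs_of_nonneg (Nat.cast_nonneg m)]
      have hpow1 : |u θ o ^ 1| ≤ 2 := by rwa [pow_one]
      have h2' : |((2:ℕ) : ℝ) * u θ o ^ 1 * u' θ o| ≤ 2 * 2 * 2 := by
        refine abs_mul_le' (abs_mul_le' ?_ hpow1) hu'2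
        rw [Nat.cast_ofNat, abs_of_nonneg]; norm_num
      exact abs_mul_le' (abs_mul_le' hu2 hv2)
        (abs_mul_le' (abs_mul_le' hm hwm') h2')
    have hfin : 8 * 5 ^ m + 2 * 2 * ((m : ℝ) * 5 ^ m * (2 * 2 * 2)) ≤ C := by
      rw [hC_def]
      nlinarith [pow_nonneg (by norm_num : (0:ℝ) ≤ 5) m]
    exact (abs_add_le _ _).trans ((add_le_add t1 t2).trans hfin)
  -- differentiability
  have hdiff : ∀ᵐ o ∂ν, ∀ θ ∈ Metric.ball (0:ℝ) 1, HasDerivAt (fun θ => F θ o) (F' θ o) θ := by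
    refine ae_of_all _ fun o θ _ => ?_
    have hu_d : HasDerivAt (fun θ => u θ o) (u' θ o) θ :=
      ((Real.hasDerivAt_cos θ).mul_const (o i)).sub ((Real.hasDerivAt_sin θ).mul_const (o j))
    have hv_d : HasDerivAt (fun θ => vv θ o) (vv' θ o) θ :=
      ((Real.hasDerivAt_sin θ).mul_const (o i)).add ((Real.hasDerivAt_cos θ).mul_const (o j))
    have hw_d : HasDerivAt (fun θ => w θ o) ((2:ℕ) * u θ o ^ 1 * u' θ o) θ :=
      HasDerivAt.const_add _ (hu_d.pow 2)
    exact (hu_d.mul hv_d).mul (hw_d.pow m)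
  have hF_meas : ∀ᶠ θ in nhds (0:ℝ), AEStronglyMeasurable (F θ) ν :=
    Filter.Eventually.of_forall fun θ => (hF_c θ).aestronglyMeasurable
  have hF_int : Integrable (F 0) ν := by
    apply Integrable.mono' (integrable_const (2 * 2 * 5 ^ m : ℝ)) (hF_c 0).aestronglyMeasurable
    filter_upwards [hfacts] with o ho
    obtain ⟨ha, hb, ht, hA⟩ := ho
    obtain ⟨hu2, _, hv2, _, hwm, _⟩ := hbnd o ha hb ht hA 0
    rw [Real.norm_eq_abs, hF_def]
    exact abs_mul_le' (abs_mul_le' hu2 hv2) hwm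
  have hF'_meas : AEStronglyMeasurable (F' 0) ν := (hF'_c 0).aestronglyMeasurable
  have hCint : Integrable (fun _ : E => C) ν := integrable_const C
  have hmain := hasDerivAt_integral_of_dominated_loc_of_deriv_le (Metric.ball_mem_nhds 0 one_pos) hF_meas hF_int
    hF'_meas hbound hCint hdiff
  -- G is constant
  have hGconst : ∀ θ : ℝ, ∫ o, F θ o ∂ν = ∫ o, F 0 o ∂ν := by
    intro θ
    set f : E → ℝ := fun o => o i * o j * Afun hMN o ^ m with hf_def
    have hf_c : Continuous f := (hpi.mul hpj).mul (hAc.pow m)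
    have hFf : ∀ θ : ℝ, F θ = fun o => f (planeRot i j hij θ o) := by
      intro θ
      funext o
      have h1 : (planeRot i j hij θ o) i = u θ o := by
        rw [planeRot_apply, if_pos rfl]
      have h2 : (planeRot i j hij θ o) j = vv θ o := by
        rw [planeRot_apply, if_neg (Ne.symm hij), if_pos rfl]
      have h3 : Afun hMN (planeRot i j hij θ o) = w θ o := Afun_rot hMN i j hij hi hj θ o
      rw [hf_def]
      simp only [h1, h2, h3, hF_def]
    have hmap := hrot (planeRot i j hij θ)
    have hRmeas : AEMeasurable (⇑(planeRot i j hij θ)) ν :=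
      (planeRot i j hij θ).continuous.measurable.aemeasurable
    have step : ∫ o, f (planeRot i j hij θ o) ∂ν = ∫ o, f o ∂ν := by
      conv_rhs => rw [← hmap]
      rw [integral_map hRmeas (by rw [hmap]; exact hf_c.aestronglyMeasurable)]
    have hF0f : F 0 = f := by
      funext o
      rw [hFf 0]
      simp only []
      congr 1
      have : planeRot i j hij 0 o = o := by
        ext l
        rw [planeRot_apply]
        split_ifs with h1 h2
        · rw [h1]; simp
        · rw [h2]; simp
        · rfl
      rw [this]
    rw [hFf θ, step, hF0f]
  have hG : (fun θ => ∫ o, F θ o ∂ν) = fun _ => ∫ o, F 0 o ∂ν := funext hGconst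
  have hzero : ∫ o, F' 0 o ∂ν = 0 := by
    have h2 := hmain.2
    rw [hG] at h2
    exact h2.unique (hasDerivAt_const _ _)
  have hF'D : F' 0 = fun o : E =>
      (o i ^ 2 - o j ^ 2) * Afun hMN o ^ m
        - 2 * (m : ℝ) * (o i ^ 2 * o j ^ 2) * Afun hMN o ^ (m - 1) := by
    funext o
    rw [hF'_def]
    simp only [hu_def, hu'_def, hvv_def, hvv'_def, hw_def, Real.cos_zero, Real.sin_zero]
    push_cast
    ring
  constructor
  · rw [← hF'D]; exact hmain.1
  · rw [← hF'D]; exact hzero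

theorem double_sum_helper {α β : Type*} [Fintype α] [Fintype β] (x : α → ℝ) (y : β → ℝ)
    (P Q : ℝ) :
    ∑ i, ∑ j, (x i * P - y j * P - Q * (x i * y j)) =
      (Fintype.card β : ℝ) * (∑ i, x i) * P - (Fintype.card α : ℝ) * (∑ j, y j) * P
        - Q * ((∑ i, x i) * (∑ j, y j)) := by
  simp only [Finset.sum_sub_distrib, Finset.sum_const, Finset.card_univ, nsmul_eq_mul,
    ← Finset.sum_mul, ← Finset.mul_sum]
  ring

theorem Afun_pow_integrable {M N : ℕ} (hMN : M ≤ N) (ν : Measure (EuclideanSpace ℝ (Fin N)))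
    (hP : IsProbabilityMeasure ν)
    (hsph : ν {o : EuclideanSpace ℝ (Fin N) | ‖o‖ ≠ 1} = 0) (k : ℕ) :
    Integrable (fun o => Afun hMN o ^ k) ν := by
  apply Integrable.mono' (integrable_const (1:ℝ))
    ((Afun_continuous hMN).pow k).aestronglyMeasurable
  have hae : ∀ᵐ o ∂ν, ‖o‖ = 1 := ae_iff.mpr hsph
  filter_upwards [hae] with o ho
  rw [Real.norm_eq_abs, Pi.pow_apply, abs_of_nonneg (pow_nonneg (Afun_nonneg hMN o) k)]
  exact pow_le_one₀ (Afun_nonneg hMN o) (Afun_le_one hMN o ho)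

theorem moment_recursion {M N : ℕ} (hMN : M ≤ N) (ν : Measure (EuclideanSpace ℝ (Fin N)))
    (hP : IsProbabilityMeasure ν)
    (hsph : ν {o : EuclideanSpace ℝ (Fin N) | ‖o‖ ≠ 1} = 0)
    (hrot : ∀ g : EuclideanSpace ℝ (Fin N) ≃ₗᵢ[ℝ] EuclideanSpace ℝ (Fin N),
      Measure.map g ν = ν) (m : ℕ) :
    ((N : ℝ) + 2 * m) * ∫ o, Afun hMN o ^ (m + 1) ∂ν
      = ((M : ℝ) + 2 * m) * ∫ o, Afun hMN o ^ m ∂ν := by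
  set E := EuclideanSpace ℝ (Fin N)
  have hJval : ∀ j' : Fin (N - M), M + (j' : ℕ) < N := fun j' => by omega
  set J : Fin (N - M) → Fin N := fun j' => ⟨M + j', hJval j'⟩ with hJ
  set D : Fin M → Fin (N - M) → E → ℝ := fun i' j' o =>
    (o (Fin.castLE hMN i') ^ 2 - o (J j') ^ 2) * Afun hMN o ^ m
      - 2 * (m : ℝ) * (o (Fin.castLE hMN i') ^ 2 * o (J j') ^ 2) * Afun hMN o ^ (m - 1)
    with hD
  have hkey : ∀ (i' : Fin M) (j' : Fin (N - M)),
      Integrable (D i' j') ν ∧ ∫ o, D i' j' o ∂ν = 0 := fun i' j' =>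
    key_integral hMN ν hP hsph hrot (Fin.castLE hMN i') (J j')
      (by simp [Fin.castLE]) (by simp [hJ]) m
  have hDsum_int : ∀ i' : Fin M, Integrable (fun o => ∑ j', D i' j' o) ν := fun i' =>
    integrable_finset_sum _ fun j' _ => (hkey i' j').1
  have hzero : ∫ o, (∑ i', ∑ j', D i' j' o) ∂ν = 0 := by
    rw [integral_finset_sum _ fun i' _ => hDsum_int i']
    rw [Finset.sum_congr rfl fun i' _ => integral_finset_sum _ fun j' _ => (hkey i' j').1]
    rw [Finset.sum_congr rfl fun i' (_ : i' ∈ Finset.univ) =>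
      Finset.sum_congr rfl fun j' (_ : j' ∈ Finset.univ) => (hkey i' j').2]
    simp
  -- pointwise identity on the sphere
  have hae : ∀ᵐ o ∂ν, ‖o‖ = 1 := ae_iff.mpr hsph
  have hpt : ∀ o : E, ‖o‖ = 1 → ∑ i', ∑ j', D i' j' o =
      ((N : ℝ) + 2 * m) * Afun hMN o ^ (m + 1) - ((M : ℝ) + 2 * m) * Afun hMN o ^ m := by
    intro o ho
    set A := Afun hMN o with hA
    have h1 : ∑ i' : Fin M, o (Fin.castLE hMN i') ^ 2 = A := rfl
    have h2 : ∑ j' : Fin (N - M), o (J j') ^ 2 = 1 - A := by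
      have hsplit : ∑ l, (o l) ^ 2 =
          ∑ i' : Fin M, o (Fin.castLE hMN i') ^ 2 + ∑ j' : Fin (N - M), o (J j') ^ 2 := by
        have he : ∀ l : Fin (M + (N - M)), True := fun _ => trivial
        rw [← Fintype.sum_equiv (finCongr (by omega : M + (N - M) = N))
          (fun l => o (finCongr (by omega : M + (N - M) = N) l) ^ 2) (fun l => o l ^ 2)
          (fun l => rfl)]
        rw [Fin.sum_univ_add]
        rfl
      have hnorm : ∑ l, (o l) ^ 2 = 1 := by rw [sum_sq_eq_norm_sq, ho]; norm_num
      rw [hnorm, h1] at hsplit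
      linarith
    have reshape : ∑ i', ∑ j', D i' j' o =
        ∑ i' : Fin M, ∑ j' : Fin (N - M),
          (o (Fin.castLE hMN i') ^ 2 * (A ^ m) - o (J j') ^ 2 * (A ^ m)
            - (2 * (m : ℝ) * A ^ (m - 1)) * (o (Fin.castLE hMN i') ^ 2 * o (J j') ^ 2)) :=
      Finset.sum_congr rfl fun i' _ => Finset.sum_congr rfl fun j' _ => by
        rw [hD]; ring
    rw [reshape, double_sum_helper, Fintype.card_fin, Fintype.card_fin, h1, h2]
    have hNM : ((N - M : ℕ) : ℝ) = (N : ℝ) - (M : ℝ) := by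
      push_cast [Nat.cast_sub hMN]; ring
    rw [hNM]
    rcases m with _ | r
    · simp only [pow_zero, pow_one, Nat.cast_zero]
      ring
    · simp only [pow_succ, Nat.add_sub_cancel]
      push_cast
      ring
  have hcongr : ∫ o, (∑ i', ∑ j', D i' j' o) ∂ν =
      ∫ o, (((N : ℝ) + 2 * m) * Afun hMN o ^ (m + 1)
        - ((M : ℝ) + 2 * m) * Afun hMN o ^ m) ∂ν := by
    apply integral_congr_ae
    filter_upwards [hae] with o ho
    exact hpt o ho
  rw [hcongr] at hzero
  rw [integral_sub ((Afun_pow_integrable hMN ν hP hsph (m+1)).const_mul _)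
    ((Afun_pow_integrable hMN ν hP hsph m).const_mul _),
    integral_const_mul, integral_const_mul] at hzero
  linarith

theorem moments {M N : ℕ} (hMN : M ≤ N) (hN : 0 < N) (ν : Measure (EuclideanSpace ℝ (Fin N)))
    (hP : IsProbabilityMeasure ν)
    (hsph : ν {o : EuclideanSpace ℝ (Fin N) | ‖o‖ ≠ 1} = 0)
    (hrot : ∀ g : EuclideanSpace ℝ (Fin N) ≃ₗᵢ[ℝ] EuclideanSpace ℝ (Fin N),
      Measure.map g ν = ν) (k : ℕ) :
    ∫ o, Afun hMN o ^ k ∂ν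
      = ∏ j ∈ Finset.range k, (((M : ℝ) + 2 * j) / ((N : ℝ) + 2 * j)) := by
  induction k with
  | zero =>
    simp only [pow_zero, Finset.range_zero, Finset.prod_empty]
    haveI := hP
    simp [integral_const]
  | succ k ih =>
    have hpos : (0:ℝ) < (N : ℝ) + 2 * k := by
      have : (1:ℝ) ≤ (N:ℝ) := by exact_mod_cast hN
      positivity
    have hrec := moment_recursion hMN ν hP hsph hrot k
    rw [Finset.prod_range_succ, ← ih]
    field_simp at hrec ⊢
    linarith [hrec]

theorem log_lower_bound {ε : ℝ} (hε : 0 < ε) (hε1 : ε < 1) :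
    (29 / 50) * ε ≤ Real.log (1 + ε) := by
  have h1 : (0:ℝ) < 1 + ε := by linarith
  rw [← Real.exp_le_exp, Real.exp_log h1]
  set x : ℝ := (29 / 50) * ε with hx
  have hx0 : 0 ≤ x := by positivity
  have hx1 : |x| ≤ 1 := by
    rw [abs_of_nonneg hx0]
    nlinarith
  have hb := Real.exp_bound hx1 (n := 3) (by norm_num)
  have hb2 := (abs_le.1 hb).2
  rw [abs_of_nonneg hx0] at hb2
  norm_num [Finset.sum_range_succ, Nat.factorial] at hb2
  rw [hx] at hb2 ⊢
  nlinarith [sq_nonneg ε, hε.le, hε1.le, pow_nonneg hε.le 3]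

/-- upper-tail concentration for a uniformly random rank-`M` orthogonal
projection `P` of `ℝ^N` applied to a fixed nonzero vector `v`: the randomness of the
projection is expressed by the fact that `‖Pv‖` is distributed as `‖v‖` times the norm of
the first `M` coordinates of a uniformly random unit vector. Then
`ℙ(‖Pv‖ ≥ √(1+ε)·√(M/N)·‖v‖) ≤ exp(−Mε²/12)`. -/
theorem random_projection_upper_tail {M N : ℕ} (hMN : M ≤ N)
    {Ω : Type*} [MeasurableSpace Ω] (μ : Measure Ω) [IsProbabilityMeasure μ]
    (P : Ω → (EuclideanSpace ℝ (Fin N) →ₗ[ℝ] EuclideanSpace ℝ (Fin N)))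
    (hproj : ∀ ω, IsOrthogonalProjection (P ω) ∧
      Module.finrank ℝ (LinearMap.range (P ω)) = M)
    (v : EuclideanSpace ℝ (Fin N)) (hv : v ≠ 0)
    (ν : Measure (EuclideanSpace ℝ (Fin N))) (hν : IsUniformOnUnitSphere ν)
    (hmeas : Measurable fun ω => ‖P ω v‖)
    (hlaw : Measure.map (fun ω => ‖P ω v‖) μ
          = Measure.map (fun o => ‖v‖ * normFirstCoords M hMN o) ν)
    (ε : ℝ) (hε : 0 < ε) (hε1 : ε < 1) :
    (μ {ω | ‖P ω v‖ ≥ Real.sqrt (1 + ε) * Real.sqrt ((M : ℝ) / N) * ‖v‖}).toReal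
      ≤ Real.exp (-(M * ε ^ 2) / 12) := by
  obtain ⟨hPν, hsph, hrot⟩ := hν
  haveI := hPν
  rcases Nat.eq_zero_or_pos M with hM0 | hM1
  · subst hM0
    have hset : {ω | ‖P ω v‖ ≥ Real.sqrt (1 + ε) * Real.sqrt (((0:ℕ) : ℝ) / N) * ‖v‖}
        = Set.univ := by
      apply Set.eq_univ_of_forall
      intro ω
      simp only [Set.mem_setOf_eq, Nat.cast_zero, zero_div, Real.sqrt_zero, mul_zero,
        zero_mul, ge_iff_le]
      exact norm_nonneg _
    rw [hset, measure_univ]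
    simp [Real.exp_zero]
  · have hN : 0 < N := lt_of_lt_of_le hM1 hMN
    have hMR : (0:ℝ) < (M:ℝ) := by exact_mod_cast hM1
    have hNR : (0:ℝ) < (N:ℝ) := by exact_mod_cast hN
    have hvpos : 0 < ‖v‖ := norm_pos_iff.mpr hv
    set L := Real.log (1 + ε) with hL_def
    have hL : (29/50) * ε ≤ L := log_lower_bound hε hε1
    have hLpos : 0 < L := lt_of_lt_of_le (by positivity) hL
    set k := ⌈(M:ℝ) * L / 2⌉₊ with hk_def
    have hkpos : 0 < k := Nat.ceil_pos.mpr (by positivity)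
    set r := (1 + ε) * ((M:ℝ) / N) with hr_def
    have hrpos : 0 < r := by positivity
    set s := Real.sqrt (1 + ε) * Real.sqrt ((M : ℝ) / N) * ‖v‖ with hs_def
    -- transfer to ν
    have hgmeas : Measurable (fun o : EuclideanSpace ℝ (Fin N) =>
        ‖v‖ * normFirstCoords M hMN o) := by
      have : Continuous fun o : EuclideanSpace ℝ (Fin N) =>
          ‖v‖ * Real.sqrt (Afun hMN o) :=
        continuous_const.mul (Real.continuous_sqrt.comp (Afun_continuous hMN))
      exact this.measurable
    have hμmap : μ {ω | ‖P ω v‖ ≥ s} = ν ((fun o => ‖v‖ * normFirstCoords M hMN o) ⁻¹'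
        Set.Ici s) := by
      have h1 : {ω | ‖P ω v‖ ≥ s} = (fun ω => ‖P ω v‖) ⁻¹' Set.Ici s := rfl
      rw [h1, ← Measure.map_apply hmeas measurableSet_Ici, hlaw,
        Measure.map_apply hgmeas measurableSet_Ici]
    have hpre : (fun o => ‖v‖ * normFirstCoords M hMN o) ⁻¹' Set.Ici s
        = {o | r ≤ Afun hMN o} := by
      ext o
      have hA0 : 0 ≤ Afun hMN o := Afun_nonneg _ _
      have hnfc : normFirstCoords M hMN o = Real.sqrt (Afun hMN o) := rfl
      simp only [Set.mem_preimage, Set.mem_Ici, Set.mem_setOf_eq, hnfc]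
      rw [hs_def]
      have hsq : Real.sqrt (1 + ε) * Real.sqrt ((M : ℝ) / N) = Real.sqrt r := by
        rw [hr_def, Real.sqrt_mul (by linarith)]
      rw [hsq]
      constructor
      · intro h
        have h2 : Real.sqrt r * ‖v‖ ≤ Real.sqrt (Afun hMN o) * ‖v‖ := by
          rw [mul_comm (‖v‖)] at h
          exact h
        have h3 : Real.sqrt r ≤ Real.sqrt (Afun hMN o) :=
          le_of_mul_le_mul_right h2 hvpos
        exact (Real.sqrt_le_sqrt_iff hA0).mp h3
      · intro h
        have h3 : Real.sqrt r ≤ Real.sqrt (Afun hMN o) :=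
          (Real.sqrt_le_sqrt_iff hA0).mpr h
        calc Real.sqrt r * ‖v‖ ≤ Real.sqrt (Afun hMN o) * ‖v‖ :=
              mul_le_mul_of_nonneg_right h3 hvpos.le
          _ = ‖v‖ * Real.sqrt (Afun hMN o) := mul_comm _ _
    -- Markov
    have hsubset : {o : EuclideanSpace ℝ (Fin N) | r ≤ Afun hMN o} ⊆
        {o | r ^ k ≤ Afun hMN o ^ k} := by
      intro o ho
      exact pow_le_pow_left₀ hrpos.le ho k
    have hint : Integrable (fun o => Afun hMN o ^ k) ν :=
      Afun_pow_integrable hMN ν hPν hsph k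
    have hmarkov := mul_meas_ge_le_integral_of_nonneg
      (ae_of_all ν fun o => pow_nonneg (Afun_nonneg hMN o) k) hint (r ^ k)
    have hmono : (ν {o | r ≤ Afun hMN o}).toReal ≤
        (ν {o | r ^ k ≤ Afun hMN o ^ k}).toReal := by
      apply ENNReal.toReal_mono (measure_ne_top ν _)
      exact measure_mono hsubset
    have hmom := moments hMN hN ν hPν hsph hrot k
    have hstep1 : (μ {ω | ‖P ω v‖ ≥ s}).toReal ≤
        (∏ j ∈ Finset.range k, (((M : ℝ) + 2 * j) / ((N : ℝ) + 2 * j))) / r ^ k := by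
      rw [hμmap, hpre]
      rw [← hmom]
      rw [le_div_iff₀ (pow_pos hrpos k), mul_comm]
      exact le_trans (mul_le_mul_of_nonneg_left hmono (pow_pos hrpos k).le) hmarkov
    -- bound the product
    have hfac : ∀ j ∈ Finset.range k,
        (((M : ℝ) + 2 * j) / ((N : ℝ) + 2 * j)) / r ≤ Real.exp (2 * j / M - L) := by
      intro j _
      have hj0 : (0:ℝ) ≤ (j:ℝ) := Nat.cast_nonneg j
      have hd1 : (0:ℝ) < (N:ℝ) + 2 * j := by positivity
      have h1ε : (0:ℝ) < 1 + ε := by linarith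
      have step1 : (((M : ℝ) + 2 * j) / ((N : ℝ) + 2 * j)) / r ≤
          (((M : ℝ) + 2 * j) / (M : ℝ)) / (1 + ε) := by
        have hle : (M:ℝ) * (1 + ε) ≤ ((N:ℝ) + 2 * j) * r := by
          rw [hr_def]
          have expand : ((N:ℝ) + 2 * j) * ((1 + ε) * ((M:ℝ) / N))
              = (M:ℝ) * (1 + ε) + 2 * j * (1 + ε) * (M:ℝ) / N := by
            field_simp
          rw [expand]
          have : (0:ℝ) ≤ 2 * j * (1 + ε) * (M:ℝ) / N := by positivity
          linarith
        rw [div_div, div_div, div_le_div_iff₀ (by positivity) (by positivity)]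
        exact mul_le_mul_of_nonneg_left hle (by positivity)
      have step2 : (((M : ℝ) + 2 * j) / (M : ℝ)) / (1 + ε) ≤ Real.exp (2 * j / M - L) := by
        have h2 : ((M : ℝ) + 2 * j) / (M : ℝ) = 2 * j / M + 1 := by
          field_simp
          ring
        have h3 : Real.exp L = 1 + ε := by rw [hL_def, Real.exp_log h1ε]
        rw [h2, Real.exp_sub, h3]
        apply div_le_div_of_nonneg_right (Real.add_one_le_exp _) h1ε.le
      exact step1.trans step2
    -- product to exponential
    have hprodsplit : (∏ j ∈ Finset.range k, (((M : ℝ) + 2 * j) / ((N : ℝ) + 2 * j))) / r ^ k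
        = ∏ j ∈ Finset.range k, ((((M : ℝ) + 2 * j) / ((N : ℝ) + 2 * j)) / r) := by
      have h1 : ∏ j ∈ Finset.range k, ((((M : ℝ) + 2 * j) / ((N : ℝ) + 2 * j)) / r)
          = (∏ j ∈ Finset.range k, (((M : ℝ) + 2 * j) / ((N : ℝ) + 2 * j)))
            / (∏ _j ∈ Finset.range k, r) := Finset.prod_div_distrib _ _
      rw [Finset.prod_const, Finset.card_range] at h1
      exact h1.symm
    have hprodle : ∏ j ∈ Finset.range k, ((((M : ℝ) + 2 * j) / ((N : ℝ) + 2 * j)) / r)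
        ≤ ∏ j ∈ Finset.range k, Real.exp (2 * j / M - L) :=
      Finset.prod_le_prod (fun j _ => by positivity) hfac
    have hexpprod : ∏ j ∈ Finset.range k, Real.exp (2 * j / M - L)
        = Real.exp (∑ j ∈ Finset.range k, (2 * (j:ℝ) / M - L)) :=
      (Real.exp_sum _ _).symm
    -- final numeric bound
    set x : ℝ := (k : ℝ) with hx_def
    have hx1 : (1:ℝ) ≤ x := by
      have h1k : 1 ≤ k := hkpos
      rw [hx_def]
      exact_mod_cast h1k
    have hxge : (M:ℝ) * L / 2 ≤ x := Nat.le_ceil _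
    have hxlt : x < (M:ℝ) * L / 2 + 1 := Nat.ceil_lt_add_one (by positivity)
    have hgauss : (∑ j ∈ Finset.range k, (j:ℝ)) * 2 = x * (x - 1) := by
      have hnat := Finset.sum_range_id_mul_two k
      have h2 := congrArg (Nat.cast : ℕ → ℝ) hnat
      push_cast [Nat.cast_sub hkpos] at h2
      rw [hx_def]
      exact_mod_cast h2
    have hsum : ∑ j ∈ Finset.range k, (2 * (j:ℝ) / M - L)
        = (x * (x - 1) - (M:ℝ) * x * L) / M := by
      have hstep : ∀ j ∈ Finset.range k, 2 * (j:ℝ) / M - L = (2 / (M:ℝ)) * (j:ℝ) - L :=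
        fun j _ => by ring
      rw [Finset.sum_congr rfl hstep, Finset.sum_sub_distrib, ← Finset.mul_sum,
        Finset.sum_const, Finset.card_range, nsmul_eq_mul]
      have hSval : ∑ j ∈ Finset.range k, (j:ℝ) = x * (x - 1) / 2 := by linarith
      rw [hSval, ← hx_def]
      field_simp
    have hmain : x * (x - 1) - (M:ℝ) * x * L + (M:ℝ)^2 * ε^2 / 12 ≤ 0 := by
      have hd0 : 0 ≤ x - (M:ℝ) * L / 2 := by linarith
      have hd1 : x - (M:ℝ) * L / 2 ≤ 1 := by linarith
      have hdd : (x - (M:ℝ) * L / 2) * (x - (M:ℝ) * L / 2) ≤ x := by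
        have h1 : (x - (M:ℝ) * L / 2) * (x - (M:ℝ) * L / 2) ≤ (x - (M:ℝ) * L / 2) * 1 :=
          mul_le_mul_of_nonneg_left hd1 hd0
        have h2 : (0:ℝ) ≤ (M:ℝ) * L / 2 := by positivity
        linarith
      have hL2 : (29/50 * ε) * (29/50 * ε) ≤ L * L :=
        mul_le_mul hL hL (by positivity) hLpos.le
      have hiden : x * (x - 1) - (M:ℝ) * x * L
          = (x - (M:ℝ)*L/2) * (x - (M:ℝ)*L/2) - ((M:ℝ)*L/2) * ((M:ℝ)*L/2) - x := by
        ring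
      have h3 : (M:ℝ)^2 * ε^2 / 12 ≤ ((M:ℝ)*L/2) * ((M:ℝ)*L/2) := by
        have h4 := mul_le_mul_of_nonneg_left hL2 (sq_nonneg (M:ℝ))
        nlinarith [h4, mul_nonneg (sq_nonneg (M:ℝ)) (sq_nonneg ε)]
      rw [hiden]
      linarith [hdd, h3]
    have hfinal : Real.exp (∑ j ∈ Finset.range k, (2 * (j:ℝ) / M - L))
        ≤ Real.exp (-(M * ε ^ 2) / 12) := by
      rw [Real.exp_le_exp, hsum, div_le_div_iff₀ hMR (by norm_num : (0:ℝ) < 12)]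
      nlinarith [hmain, hMR]
    calc (μ {ω | ‖P ω v‖ ≥ s}).toReal
        ≤ (∏ j ∈ Finset.range k, (((M : ℝ) + 2 * j) / ((N : ℝ) + 2 * j))) / r ^ k := hstep1
      _ = ∏ j ∈ Finset.range k, ((((M : ℝ) + 2 * j) / ((N : ℝ) + 2 * j)) / r) := hprodsplit
      _ ≤ ∏ j ∈ Finset.range k, Real.exp (2 * j / M - L) := hprodle
      _ = Real.exp (∑ j ∈ Finset.range k, (2 * (j:ℝ) / M - L)) := hexpprod
      _ ≤ Real.exp (-(M * ε ^ 2) / 12) := hfinal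
end

section
/- Let A ∈ ℝ^{M×N} with M ≤ N and full row rank, with row-space projection P = A†A. Fix x ∈ ℝ^N, a codeword c_i ∈ ℝ^N, and r > 0 with ‖P(c_i − x)‖₂ > r. Then there exists a perturbation w with ‖w‖₂ = ‖P(c_i − x)‖₂ − r and a point t with ‖t − c_i‖₂ ≤ r such that A(x + w) = A t. (Hence a targeted attack of magnitude ‖P(c_i − x)‖₂ − r suffices to make the compressed statistic A(x+w) coincide with that of a point in the ball around c_i.) -/
/-- Moore–Penrose pseudoinverse of a full-row-rank matrix: `A† = Aᵀ (A Aᵀ)⁻¹`. -/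
noncomputable def moorePenrosePinv {M N : ℕ} (A : Matrix (Fin M) (Fin N) ℝ) :
    Matrix (Fin N) (Fin M) ℝ :=
  A.transpose * (A * A.transpose)⁻¹

lemma gram_isUnit {M N : ℕ} (A : Matrix (Fin M) (Fin N) ℝ) (hrank : A.rank = M) :
    IsUnit (A * A.transpose) := by
  rw [← Matrix.mulVec_surjective_iff_isUnit]
  have hrk : (A * A.transpose).rank = M := by
    rw [Matrix.rank_self_mul_transpose, hrank]
  have hrange : LinearMap.range (A * A.transpose).mulVecLin = ⊤ := by
    apply Submodule.eq_top_of_finrank_eq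
    rw [← Matrix.rank, hrk]
    simp [Module.finrank_pi]
  intro y
  have : y ∈ LinearMap.range (A * A.transpose).mulVecLin := by rw [hrange]; trivial
  obtain ⟨v, hv⟩ := this
  exact ⟨v, hv⟩

lemma AP_eq_A {M N : ℕ} (A : Matrix (Fin M) (Fin N) ℝ) (hrank : A.rank = M) :
    A * (moorePenrosePinv A * A) = A := by
  have h := gram_isUnit A hrank
  rw [moorePenrosePinv, ← Matrix.mul_assoc, ← Matrix.mul_assoc,
    Matrix.mul_nonsing_inv _ ((Matrix.isUnit_iff_isUnit_det _).mp h), Matrix.one_mul]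

/-- if `‖P(c_i − x)‖ > r`, there is a targeted attack `w` of magnitude exactly
`‖P(c_i − x)‖ − r` and a point `t` of the ball `B(c_i, r)` with `A(x + w) = A t`. -/
theorem targeted_attack_of_size_proj_dist {M N : ℕ} (hMN : M ≤ N)
    (A : Matrix (Fin M) (Fin N) ℝ) (hrank : A.rank = M)
    (P : EuclideanSpace ℝ (Fin N) →ₗ[ℝ] EuclideanSpace ℝ (Fin N))
    (hP : P = Matrix.toEuclideanLin (moorePenrosePinv A * A))
    (x ci : EuclideanSpace ℝ (Fin N)) (r : ℝ) (hr : 0 < r)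
    (hfar : ‖P (ci - x)‖ > r) :
    ∃ (w t : EuclideanSpace ℝ (Fin N)),
      ‖w‖ = ‖P (ci - x)‖ - r ∧ ‖t - ci‖ ≤ r ∧
      Matrix.toEuclideanLin A (x + w) = Matrix.toEuclideanLin A t := by
  set u : EuclideanSpace ℝ (Fin N) := P (ci - x) with hu
  set d : ℝ := ‖u‖ with hd
  have hd0 : 0 < d := lt_trans hr hfar
  refine ⟨(1 - r / d) • u, ci - (r / d) • u, ?_, ?_, ?_⟩
  · rw [norm_smul, Real.norm_eq_abs, abs_of_nonneg, ← hd]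
    · field_simp
    · have : r / d ≤ 1 := (div_le_one hd0).mpr (le_of_lt hfar)
      linarith
  · have : ci - (r / d) • u - ci = -((r / d) • u) := by abel
    rw [this, norm_neg, norm_smul, Real.norm_eq_abs, abs_of_nonneg (by positivity), ← hd]
    rw [div_mul_cancel₀ _ (ne_of_gt hd0)]
  · -- key: A ∘ P = A
    have hAP : ∀ v : EuclideanSpace ℝ (Fin N),
        Matrix.toEuclideanLin A (P v) = Matrix.toEuclideanLin A v := by
      intro v
      rw [hP]
      have := AP_eq_A A hrank
      simp only [Matrix.toEuclideanLin_apply]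
      apply (WithLp.equiv 2 (Fin M → ℝ)).symm.injective.eq_iff.mpr
      simp only [Matrix.mulVec_mulVec]
      rw [this]
    have h1 : Matrix.toEuclideanLin A ((1 - r / d) • u)
        = (1 - r / d) • Matrix.toEuclideanLin A (ci - x) := by
      rw [map_smul, hu, hAP]
    have h2 : Matrix.toEuclideanLin A ((r / d) • u)
        = (r / d) • Matrix.toEuclideanLin A (ci - x) := by
      rw [map_smul, hu, hAP]
    rw [map_add, map_sub, h1, h2, map_sub]
    module
end
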